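/- Suppose w : (0,∞) × [μ,∞) → ℝ is continuous, is continuously differentiable on (0,∞) × (μ,∞) where it satisfies the partial differential equation β x y ∂ₓw(x,y) + (γ − β x) y ∂_y w(x,y) = 1, and satisfies the boundary condition w(x, μ) = 0 for all x ∈ (0, γ/β]. Then for every x > 0 and y > μ, w(x, y) = u(x, y), the first hitting time of the threshold μ for the SIR solution with initial data (x, y). In particular, such a solution w of the boundary-value problem is unique. -/

import Mathlib

open Set Filter

/-- An SIR solution with parameters β, γ and initial data (x, y):
differentiable functions S, I on [0,∞) with S' = -βSI, I' = βSI - γI,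
S(0) = x, I(0) = y. -/
def IsSIRSolution (β γ x y : ℝ) (S I : ℝ → ℝ) : Prop :=
  S 0 = x ∧ I 0 = y ∧
  ∀ t, 0 ≤ t →
    HasDerivWithinAt S (-(β * S t * I t)) (Set.Ici 0) t ∧
    HasDerivWithinAt I (β * S t * I t - γ * I t) (Set.Ici 0) t

theorem stmt_10 (β γ μ : ℝ) (hβ : 0 < β) (hγ : 0 < γ) (hμ : 0 < μ)
    (w : ℝ × ℝ → ℝ)
    (hw_cont : ContinuousOn w (Set.Ioi 0 ×ˢ Set.Ici μ))
    (hw_diff : ContDiffOn ℝ 1 w (Set.Ioi 0 ×ˢ Set.Ioi μ))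
    (hw_pde : ∀ p ∈ (Set.Ioi (0:ℝ)) ×ˢ (Set.Ioi μ),
      β * p.1 * p.2 * fderiv ℝ w p (1, 0) +
        (γ - β * p.1) * p.2 * fderiv ℝ w p (0, 1) = 1)
    (hw_bc : ∀ x ∈ Set.Ioc (0:ℝ) (γ / β), w (x, μ) = 0)
    (x y : ℝ) (hx : 0 < x) (hy : μ < y)
    (S I : ℝ → ℝ) (hSI : IsSIRSolution β γ x y S I)
    (u : ℝ) (hu : IsLeast {t : ℝ | 0 ≤ t ∧ I t ≤ μ} u) :
    w (x, y) = u := by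
  obtain ⟨hS0, hI0, hderiv⟩ := hSI
  obtain ⟨⟨hu0, hIu⟩, hlb⟩ := hu
  -- u > 0
  have hupos : 0 < u := by
    rcases hu0.lt_or_eq with h | h
    · exact h
    · exfalso; rw [← h, hI0] at hIu; linarith
  -- continuity of S, I on [0,∞)
  have hScont : ContinuousOn S (Ici 0) := fun t ht => ((hderiv t ht).1).continuousWithinAt
  have hIcont : ContinuousOn I (Ici 0) := fun t ht => ((hderiv t ht).2).continuousWithinAt
  -- I > μ before u
  have hIgt : ∀ s ∈ Ico (0:ℝ) u, μ < I s := by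
    intro s hs
    by_contra h
    push_neg at h
    exact absurd (hlb ⟨hs.1, h⟩) (not_le.2 hs.2)
  -- I u = μ
  have hIueq : I u = μ := by
    rcases hIu.lt_or_eq with h | h
    · exfalso
      have hsub : Icc (0:ℝ) u ⊆ Ici 0 := fun s hs => hs.1
      have := intermediate_value_Icc' hu0 (hIcont.mono hsub)
      obtain ⟨s, hs, hsμ⟩ := this ⟨h.le, by rw [hI0]; exact hy.le⟩
      have h1 : u ≤ s := hlb ⟨hs.1, hsμ.le⟩
      have h2 : s = u := le_antisymm hs.2 h1
      rw [h2] at hsμ; rw [hsμ] at h; exact lt_irrefl _ h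
    · exact h
  have hIge : ∀ s ∈ Icc (0:ℝ) u, μ ≤ I s := by
    intro s hs
    rcases hs.2.lt_or_eq with h | h
    · exact (hIgt s ⟨hs.1, h⟩).le
    · rw [h, hIueq]
  -- positivity of S on [0, u] via integrating factor
  set J : ℝ → ℝ := fun t => ∫ s in (0:ℝ)..t, I s with hJdef
  have hIint : ∀ t ∈ Icc (0:ℝ) u, IntervalIntegrable I MeasureTheory.volume 0 t := by
    intro t ht
    apply ContinuousOn.intervalIntegrable
    apply hIcont.mono
    intro s hs
    rw [uIcc_of_le ht.1] at hs
    exact hs.1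
  have hJderiv : ∀ t ∈ Ico (0:ℝ) u, HasDerivWithinAt J (I t) (Ici t) t := by
    intro t ht
    refine intervalIntegral.integral_hasDerivWithinAt_right (hIint t ⟨ht.1, ht.2.le⟩)
      (StronglyMeasurableAtFilter.filter_mono
        (hIcont.stronglyMeasurableAtFilter_nhdsWithin measurableSet_Ici t)
        (nhdsWithin_mono t (fun s hs => le_of_lt (lt_of_le_of_lt ht.1 hs))))
      ((hIcont t ht.1).mono (fun s hs => le_of_lt (lt_of_le_of_lt ht.1 hs)))
  have hJcont : ContinuousOn J (Icc 0 u) := by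
    have : MeasureTheory.IntegrableOn I (uIcc 0 u) MeasureTheory.volume := by
      rw [uIcc_of_le hu0]
      exact ContinuousOn.integrableOn_Icc (hIcont.mono fun s hs => hs.1)
    have := intervalIntegral.continuousOn_primitive_interval this
    rwa [uIcc_of_le hu0] at this
  set E : ℝ → ℝ := fun t => S t * Real.exp (β * J t) with hEdef
  have hEcont : ContinuousOn E (Icc 0 u) :=
    (hScont.mono fun s hs => hs.1).mul ((hJcont.const_smul β).rexp)
  have hEderiv : ∀ t ∈ Ico (0:ℝ) u, HasDerivWithinAt E 0 (Ici t) t := by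
    intro t ht
    have h1 : HasDerivWithinAt S (-(β * S t * I t)) (Ici t) t :=
      ((hderiv t ht.1).1).mono (Ici_subset_Ici.2 ht.1)
    have h2 : HasDerivWithinAt (fun s => Real.exp (β * J s))
        (Real.exp (β * J t) * (β * I t)) (Ici t) t :=
      ((hJderiv t ht).const_mul β).exp
    have : HasDerivWithinAt (fun s => S s * Real.exp (β * J s)) _ (Ici t) t := h1.mul h2
    convert this using 1
    ring
  have hEeq : ∀ t ∈ Icc (0:ℝ) u, E t = E 0 :=
    constant_of_has_deriv_right_zero hEcont hEderiv
  have hE0 : E 0 = x := by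
    show S 0 * Real.exp (β * ∫ s in (0:ℝ)..(0:ℝ), I s) = x
    rw [hS0, intervalIntegral.integral_same]
    simp
  have hSpos : ∀ t ∈ Icc (0:ℝ) u, 0 < S t := by
    intro t ht
    have h1 : S t * Real.exp (β * J t) = x := by
      have := hEeq t ht; rw [hE0] at this; exact this
    have h2 : (0:ℝ) < Real.exp (β * J t) := Real.exp_pos _
    nlinarith [Real.exp_pos (β * J t)]
  -- the trajectory stays in the domain
  have htraj : ∀ t ∈ Icc (0:ℝ) u, (S t, I t) ∈ Ioi (0:ℝ) ×ˢ Ici μ := by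
    intro t ht
    exact ⟨hSpos t ht, hIge t ht⟩
  have htraj' : ∀ t ∈ Ico (0:ℝ) u, (S t, I t) ∈ Ioi (0:ℝ) ×ˢ Ioi μ := by
    intro t ht
    exact ⟨hSpos t ⟨ht.1, ht.2.le⟩, hIgt t ht⟩
  -- g t = w (S t, I t) + t is constant on [0, u]
  set g : ℝ → ℝ := fun t => w (S t, I t) + t with hgdef
  have hopen : IsOpen (Ioi (0:ℝ) ×ˢ Ioi μ) := (isOpen_Ioi).prod (isOpen_Ioi)
  have hgcont : ContinuousOn g (Icc 0 u) := by
    apply ContinuousOn.add _ continuousOn_id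
    exact hw_cont.comp (((hScont.mono fun s (hs : s ∈ Icc (0:ℝ) u) => hs.1)).prodMk
      ((hIcont.mono fun s (hs : s ∈ Icc (0:ℝ) u) => hs.1))) htraj
  have hgderiv : ∀ t ∈ Ico (0:ℝ) u, HasDerivWithinAt g 0 (Ici t) t := by
    intro t ht
    have hp : (S t, I t) ∈ Ioi (0:ℝ) ×ˢ Ioi μ := htraj' t ht
    have hwd : HasFDerivAt w (fderiv ℝ w (S t, I t)) (S t, I t) := by
      have := (hw_diff.contDiffAt (hopen.mem_nhds hp)).differentiableAt one_ne_zero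
      exact this.hasFDerivAt
    have h1 : HasDerivWithinAt S (-(β * S t * I t)) (Ici t) t :=
      ((hderiv t ht.1).1).mono (Ici_subset_Ici.2 ht.1)
    have h2 : HasDerivWithinAt I (β * S t * I t - γ * I t) (Ici t) t :=
      ((hderiv t ht.1).2).mono (Ici_subset_Ici.2 ht.1)
    have hprod : HasDerivWithinAt (fun s => (S s, I s))
        ((-(β * S t * I t), β * S t * I t - γ * I t)) (Ici t) t := h1.prodMk h2
    have hcomp := hwd.comp_hasDerivWithinAt t hprod
    have hlin : (fderiv ℝ w (S t, I t)) ((-(β * S t * I t), β * S t * I t - γ * I t))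
        = (-(β * S t * I t)) * (fderiv ℝ w (S t, I t)) (1, 0)
          + (β * S t * I t - γ * I t) * (fderiv ℝ w (S t, I t)) (0, 1) := by
      have heq : ((-(β * S t * I t), β * S t * I t - γ * I t) : ℝ × ℝ)
          = (-(β * S t * I t)) • ((1:ℝ), (0:ℝ)) + (β * S t * I t - γ * I t) • ((0:ℝ), (1:ℝ)) := by
        simp [Prod.ext_iff]
      rw [heq, map_add, map_smul, map_smul, smul_eq_mul, smul_eq_mul]
    have hpde := hw_pde (S t, I t) hp
    simp only at hpde
    have hval : (fderiv ℝ w (S t, I t)) ((-(β * S t * I t), β * S t * I t - γ * I t)) = -1 := by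
      rw [hlin]
      linear_combination -hpde
    have : HasDerivWithinAt g
        ((fderiv ℝ w (S t, I t)) ((-(β * S t * I t), β * S t * I t - γ * I t)) + 1)
        (Ici t) t := by
      exact HasDerivWithinAt.add hcomp (hasDerivWithinAt_id t (Ici t))
    rw [hval] at this
    simpa using this
  have hgconst : g u = g 0 := constant_of_has_deriv_right_zero hgcont hgderiv u
    ⟨hu0, le_rfl⟩
  -- S u ≤ γ / β via local minimum of I at u
  have hSu_le : S u ≤ γ / β := by
    have hd : HasDerivAt I (β * S u * I u - γ * I u) u := by
      have := (hderiv u hu0).2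
      exact this.hasDerivAt (Ici_mem_nhds hupos)
    have hmin : IsLocalMinOn I (Iic u) u := by
      have hmem : Ioi (0:ℝ) ∈ nhdsWithin u (Iic u) :=
        mem_nhdsWithin_of_mem_nhds (Ioi_mem_nhds hupos)
      filter_upwards [hmem, self_mem_nhdsWithin] with s hs1 hs2
      rw [hIueq]
      exact hIge s ⟨le_of_lt hs1, hs2⟩
    have hcone : (-1 : ℝ) ∈ posTangentConeAt (Iic u) u := by
      have hseg : segment ℝ u (u - 1) ⊆ Iic u := by
        intro z hz
        rcases hz with ⟨a, b, ha, hb, hab, habz⟩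
        simp only [smul_eq_mul] at habz
        have : z = u - b := by rw [← habz]; nlinarith
        rw [this]
        simp
        linarith
      have := sub_mem_posTangentConeAt_of_segment_subset hseg
      simpa using this
    have hfd : HasFDerivWithinAt I
        ((1 : ℝ →L[ℝ] ℝ).smulRight (β * S u * I u - γ * I u)) (Iic u) u :=
      (hd.hasFDerivAt).hasFDerivWithinAt
    have := hmin.hasFDerivWithinAt_nonneg hfd hcone
    simp only [ContinuousLinearMap.smulRight_apply, ContinuousLinearMap.one_apply,
      smul_eq_mul] at this
    rw [hIueq] at this
    rw [le_div_iff₀ hβ]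
    nlinarith
  -- boundary condition gives w (S u, μ) = 0
  have hbc : w (S u, I u) = 0 := by
    rw [hIueq]
    exact hw_bc (S u) ⟨hSpos u ⟨hu0, le_rfl⟩, hSu_le⟩
  -- conclude
  have : w (S u, I u) + u = w (S 0, I 0) + 0 := hgconst
  rw [hbc, hS0, hI0] at this
  linarith
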